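/- Let U ⊆ ℍ be open, f₀, f₁ : ℝ⁴ → ℝ be C¹, f : U → ℍ be given by f(x) = f₁(x₁,x₂,x₃,x₄)e₁ + ∑ᵢ₌₂⁴ xᵢ f₀(x₁,x₂,x₃,x₄)eᵢ, and c = ∑ₖcₖeₖ ∈ U. If f is algebraic regular at c, then the limit as Δq → 0 (Δq ∈ ℍ, Δq ≠ 0) of { f(c+Δq) − f(c) + ∑ᵢ₌₂⁴ [ f→ᶜᵢ(c + (Δq)ᵢ·(e₁+e₂+e₃+e₄)) − f→ᶜᵢ(c) ] }·(Δq)⁻¹ exists and equals ∂f/∂x₁(c), where (Δq)ᵢ denotes the i-th real coordinate of Δq. (Formally: the indicated function of Δq tends to ∂f/∂x₁(c) along the punctured neighborhood filter 𝓝[≠] 0 in ℍ.) -/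

import Mathlib

open scoped Quaternion

noncomputable section

/-- The standard basis `e₁ = 1, e₂ = i, e₃ = j, e₄ = k` of the quaternions. -/
def e : Fin 4 → ℍ[ℝ] := ![1, ⟨0,1,0,0⟩, ⟨0,0,1,0⟩, ⟨0,0,0,1⟩]

/-- The real coordinates of a quaternion. -/
def toTuple (x : ℍ[ℝ]) : Fin 4 → ℝ := ![x.re, x.imI, x.imJ, x.imK]
/-- The `i`-th partial derivative of a function `g : ℝ⁴ → ℝ`. -/
def pd (g : (Fin 4 → ℝ) → ℝ) (i : Fin 4) (p : Fin 4 → ℝ) : ℝ :=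
  fderiv ℝ g p (Pi.single i 1)

/-- `f` is given on `U` by `f(x) = f₁(x₁,x₂,x₃,x₄)e₁ + ∑ₖ₌₂⁴ xₖ f₀(x₁,x₂,x₃,x₄)eₖ`. -/
def Represents (f : ℍ[ℝ] → ℍ[ℝ]) (U : Set ℍ[ℝ]) (f₀ f₁ : (Fin 4 → ℝ) → ℝ) : Prop :=
  ∀ x ∈ U, f x = f₁ (toTuple x) • e 0 + (x.imI * f₀ (toTuple x)) • e 1 +
    (x.imJ * f₀ (toTuple x)) • e 2 + (x.imK * f₀ (toTuple x)) • e 3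

/-- The generalized Cauchy–Riemann equations (ii) of algebraic regularity, at `p ∈ ℝ⁴`. -/
def RegularEqs (f₀ f₁ : (Fin 4 → ℝ) → ℝ) (p : Fin 4 → ℝ) : Prop :=
  pd f₁ 0 p = f₀ p + p 1 * pd f₀ 1 p + p 2 * pd f₀ 2 p + p 3 * pd f₀ 3 p ∧
  (∀ i : Fin 4, i ≠ 0 → pd f₁ i p = -(p i * pd f₀ 0 p)) ∧
  (∀ i j : Fin 4, i ≠ 0 → j ≠ 0 → i ≠ j → p i * pd f₀ j p = p j * pd f₀ i p)

/-- `f` is algebraic regular at `c ∈ U`. -/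
def AlgebraicRegularAt (f : ℍ[ℝ] → ℍ[ℝ]) (U : Set ℍ[ℝ]) (c : ℍ[ℝ]) : Prop :=
  ∃ f₀ f₁ : (Fin 4 → ℝ) → ℝ, ContDiff ℝ 1 f₀ ∧ ContDiff ℝ 1 f₁ ∧
    Represents f U f₀ f₁ ∧ RegularEqs f₀ f₁ (toTuple c)

/-- `f` is algebraic regular on `U`. -/
def AlgebraicRegularOn (f : ℍ[ℝ] → ℍ[ℝ]) (U : Set ℍ[ℝ]) : Prop :=
  ∀ c ∈ U, AlgebraicRegularAt f U c
/-- The function `f→ᶜ₄` (case `i = 2, j = 3` of (114)). -/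
def frFour (f₀ : (Fin 4 → ℝ) → ℝ) (c : ℍ[ℝ]) (x : ℍ[ℝ]) : ℍ[ℝ] :=
  (c.imI * f₀ ![c.re, x.imI, c.imJ, c.imK] + c.imJ * f₀ ![c.re, c.imI, x.imJ, c.imK]) • e 3 +
  ((-1 : ℝ) ^ (2 + 3) * c.imI * f₀ ![x.re, c.imI, c.imJ, c.imK] -
    c.imK * f₀ ![c.re, c.imI, x.imJ, c.imK]) • e 2 -
  ((-1 : ℝ) ^ (2 + 3) * c.imJ * f₀ ![x.re, c.imI, c.imJ, c.imK] +
    c.imK * f₀ ![c.re, x.imI, c.imJ, c.imK]) • e 1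

/-- The function `f→ᶜ₃` (case `i = 2, j = 4` of (114)). -/
def frThree (f₀ : (Fin 4 → ℝ) → ℝ) (c : ℍ[ℝ]) (x : ℍ[ℝ]) : ℍ[ℝ] :=
  (c.imI * f₀ ![c.re, x.imI, c.imJ, c.imK] + c.imK * f₀ ![c.re, c.imI, c.imJ, x.imK]) • e 2 +
  ((-1 : ℝ) ^ (2 + 4) * c.imI * f₀ ![x.re, c.imI, c.imJ, c.imK] -
    c.imJ * f₀ ![c.re, c.imI, c.imJ, x.imK]) • e 3 -
  ((-1 : ℝ) ^ (2 + 4) * c.imK * f₀ ![x.re, c.imI, c.imJ, c.imK] +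
    c.imJ * f₀ ![c.re, x.imI, c.imJ, c.imK]) • e 1

/-- The function `f→ᶜ₂` (case `i = 3, j = 4` of (114)). -/
def frTwo (f₀ : (Fin 4 → ℝ) → ℝ) (c : ℍ[ℝ]) (x : ℍ[ℝ]) : ℍ[ℝ] :=
  (c.imJ * f₀ ![c.re, c.imI, x.imJ, c.imK] + c.imK * f₀ ![c.re, c.imI, c.imJ, x.imK]) • e 1 +
  ((-1 : ℝ) ^ (3 + 4) * c.imJ * f₀ ![x.re, c.imI, c.imJ, c.imK] -
    c.imI * f₀ ![c.re, c.imI, c.imJ, x.imK]) • e 3 -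
  ((-1 : ℝ) ^ (3 + 4) * c.imK * f₀ ![x.re, c.imI, c.imJ, c.imK] +
    c.imI * f₀ ![c.re, c.imI, x.imJ, c.imK]) • e 2

/-- The right difference quotient of Proposition 4.1 (iii). -/
def rightQuot (f : ℍ[ℝ] → ℍ[ℝ]) (f₀ : (Fin 4 → ℝ) → ℝ) (c : ℍ[ℝ]) (Δq : ℍ[ℝ]) : ℍ[ℝ] :=
  (f (c + Δq) - f c +
      (frTwo f₀ c (c + Δq.imI • (e 0 + e 1 + e 2 + e 3)) - frTwo f₀ c c) +
      (frThree f₀ c (c + Δq.imJ • (e 0 + e 1 + e 2 + e 3)) - frThree f₀ c c) +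
      (frFour f₀ c (c + Δq.imK • (e 0 + e 1 + e 2 + e 3)) - frFour f₀ c c)) *
    (Δq)⁻¹

/-! ### Auxiliary machinery -/

/-- The coordinate map as a continuous linear map. -/
def auxT : ℍ[ℝ] →L[ℝ] (Fin 4 → ℝ) :=
  LinearMap.toContinuousLinearMap ((QuaternionAlgebra.linearEquivTuple (-1:ℝ) 0 (-1)).toLinearMap :
    ℍ[ℝ] →ₗ[ℝ] (Fin 4 → ℝ))

@[simp] lemma auxT1 (v : ℍ[ℝ]) : auxT v 1 = v.imI := rfl
@[simp] lemma auxT2 (v : ℍ[ℝ]) : auxT v 2 = v.imJ := rfl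
@[simp] lemma auxT3 (v : ℍ[ℝ]) : auxT v 3 = v.imK := rfl
@[simp] lemma aux_tt0 (x : ℍ[ℝ]) : toTuple x 0 = x.re := rfl
@[simp] lemma aux_tt1 (x : ℍ[ℝ]) : toTuple x 1 = x.imI := rfl
@[simp] lemma aux_tt2 (x : ℍ[ℝ]) : toTuple x 2 = x.imJ := rfl
@[simp] lemma aux_tt3 (x : ℍ[ℝ]) : toTuple x 3 = x.imK := rfl

lemma eP0 : e 0 = 1 := rfl
lemma eP1 : (e 1).re = 0 ∧ (e 1).imI = 1 ∧ (e 1).imJ = 0 ∧ (e 1).imK = 0 := ⟨rfl, rfl, rfl, rfl⟩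
lemma eP2 : (e 2).re = 0 ∧ (e 2).imI = 0 ∧ (e 2).imJ = 1 ∧ (e 2).imK = 0 := ⟨rfl, rfl, rfl, rfl⟩
lemma eP3 : (e 3).re = 0 ∧ (e 3).imI = 0 ∧ (e 3).imJ = 0 ∧ (e 3).imK = 1 := ⟨rfl, rfl, rfl, rfl⟩

lemma aux_toTuple_add (c Δq : ℍ[ℝ]) : toTuple (c + Δq) = toTuple c + auxT Δq :=
  auxT.map_add c Δq

lemma auxTe : ∀ k, auxT (e k) = Pi.single k 1 := by
  intro k; funext i
  fin_cases k <;> fin_cases i <;> simp [e, auxT, Pi.single, Function.update] <;> rfl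

lemma auxTv (v : ℍ[ℝ]) : auxT v = v.re • (Pi.single 0 1 : Fin 4 → ℝ) +
    v.imI • (Pi.single 1 1 : Fin 4 → ℝ) + v.imJ • (Pi.single 2 1 : Fin 4 → ℝ) +
    v.imK • (Pi.single 3 1 : Fin 4 → ℝ) := by
  funext i; fin_cases i <;> simp [Pi.single, Function.update] <;> rfl

lemma aux_sAll_eq : e 0 + e 1 + e 2 + e 3 = (⟨1,1,1,1⟩ : ℍ[ℝ]) := by
  ext <;> simp [eP0, eP1, eP2, eP3] <;> norm_num

lemma aux_upd0 (c : ℍ[ℝ]) (t : ℝ) :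
    ![(c + t • (e 0 + e 1 + e 2 + e 3)).re, c.imI, c.imJ, c.imK]
      = toTuple c + t • (Pi.single 0 1 : Fin 4 → ℝ) := by
  rw [aux_sAll_eq]; funext i; fin_cases i <;> simp [toTuple, Pi.single, Function.update] <;> exact mul_one t

lemma aux_upd1 (c : ℍ[ℝ]) (t : ℝ) :
    ![c.re, (c + t • (e 0 + e 1 + e 2 + e 3)).imI, c.imJ, c.imK]
      = toTuple c + t • (Pi.single 1 1 : Fin 4 → ℝ) := by
  rw [aux_sAll_eq]; funext i; fin_cases i <;> simp [toTuple, Pi.single, Function.update] <;> exact mul_one t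

lemma aux_upd2 (c : ℍ[ℝ]) (t : ℝ) :
    ![c.re, c.imI, (c + t • (e 0 + e 1 + e 2 + e 3)).imJ, c.imK]
      = toTuple c + t • (Pi.single 2 1 : Fin 4 → ℝ) := by
  rw [aux_sAll_eq]; funext i; fin_cases i <;> simp [toTuple, Pi.single, Function.update] <;> exact mul_one t

lemma aux_upd3 (c : ℍ[ℝ]) (t : ℝ) :
    ![c.re, c.imI, c.imJ, (c + t • (e 0 + e 1 + e 2 + e 3)).imK]
      = toTuple c + t • (Pi.single 3 1 : Fin 4 → ℝ) := by
  rw [aux_sAll_eq]; funext i; fin_cases i <;> simp [toTuple, Pi.single, Function.update] <;> exact mul_one t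

lemma frTwo_line (f₀ : (Fin 4 → ℝ) → ℝ) (c : ℍ[ℝ]) (t : ℝ) :
    frTwo f₀ c (c + t • (e 0 + e 1 + e 2 + e 3)) =
    (c.imJ * f₀ (toTuple c + t • (Pi.single 2 1 : Fin 4 → ℝ)) +
      c.imK * f₀ (toTuple c + t • (Pi.single 3 1 : Fin 4 → ℝ))) • e 1 +
    ((-1 : ℝ) ^ (3 + 4) * c.imJ * f₀ (toTuple c + t • (Pi.single 0 1 : Fin 4 → ℝ)) -
      c.imI * f₀ (toTuple c + t • (Pi.single 3 1 : Fin 4 → ℝ))) • e 3 -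
    ((-1 : ℝ) ^ (3 + 4) * c.imK * f₀ (toTuple c + t • (Pi.single 0 1 : Fin 4 → ℝ)) +
      c.imI * f₀ (toTuple c + t • (Pi.single 2 1 : Fin 4 → ℝ))) • e 2 := by
  rw [frTwo, aux_upd0, aux_upd2, aux_upd3]

lemma frThree_line (f₀ : (Fin 4 → ℝ) → ℝ) (c : ℍ[ℝ]) (t : ℝ) :
    frThree f₀ c (c + t • (e 0 + e 1 + e 2 + e 3)) =
    (c.imI * f₀ (toTuple c + t • (Pi.single 1 1 : Fin 4 → ℝ)) +
      c.imK * f₀ (toTuple c + t • (Pi.single 3 1 : Fin 4 → ℝ))) • e 2 +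
    ((-1 : ℝ) ^ (2 + 4) * c.imI * f₀ (toTuple c + t • (Pi.single 0 1 : Fin 4 → ℝ)) -
      c.imJ * f₀ (toTuple c + t • (Pi.single 3 1 : Fin 4 → ℝ))) • e 3 -
    ((-1 : ℝ) ^ (2 + 4) * c.imK * f₀ (toTuple c + t • (Pi.single 0 1 : Fin 4 → ℝ)) +
      c.imJ * f₀ (toTuple c + t • (Pi.single 1 1 : Fin 4 → ℝ))) • e 1 := by
  rw [frThree, aux_upd0, aux_upd1, aux_upd3]

lemma frFour_line (f₀ : (Fin 4 → ℝ) → ℝ) (c : ℍ[ℝ]) (t : ℝ) :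
    frFour f₀ c (c + t • (e 0 + e 1 + e 2 + e 3)) =
    (c.imI * f₀ (toTuple c + t • (Pi.single 1 1 : Fin 4 → ℝ)) +
      c.imJ * f₀ (toTuple c + t • (Pi.single 2 1 : Fin 4 → ℝ))) • e 3 +
    ((-1 : ℝ) ^ (2 + 3) * c.imI * f₀ (toTuple c + t • (Pi.single 0 1 : Fin 4 → ℝ)) -
      c.imK * f₀ (toTuple c + t • (Pi.single 2 1 : Fin 4 → ℝ))) • e 2 -
    ((-1 : ℝ) ^ (2 + 3) * c.imJ * f₀ (toTuple c + t • (Pi.single 0 1 : Fin 4 → ℝ)) +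
      c.imK * f₀ (toTuple c + t • (Pi.single 1 1 : Fin 4 → ℝ))) • e 1 := by
  rw [frFour, aux_upd0, aux_upd1, aux_upd2]

lemma aux_pd_comp (f₀ : (Fin 4 → ℝ) → ℝ) (hf₀ : ContDiff ℝ 1 f₀) (c : ℍ[ℝ]) (k : Fin 4) :
    pd f₀ k (toTuple c) = fderiv ℝ (fun y => f₀ (toTuple y)) c (e k) := by
  have hA : HasFDerivAt f₀ (fderiv ℝ f₀ (toTuple c)) (auxT c) :=
    (hf₀.differentiable one_ne_zero (toTuple c)).hasFDerivAt
  have h : HasFDerivAt (fun y => f₀ (toTuple y)) ((fderiv ℝ f₀ (toTuple c)).comp auxT) c :=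
    hA.comp c auxT.hasFDerivAt
  rw [h.fderiv, ContinuousLinearMap.comp_apply, auxTe, pd]

lemma aux_rep_mk (r0 r1 : ℝ) (x : ℍ[ℝ]) :
    r1 • e 0 + (x.imI * r0) • e 1 + (x.imJ * r0) • e 2 + (x.imK * r0) • e 3
      = (⟨r1, x.imI * r0, x.imJ * r0, x.imK * r0⟩ : ℍ[ℝ]) := by
  ext <;> simp [eP0, eP1, eP2, eP3]

lemma aux_transfer (U : Set ℍ[ℝ]) (hU : IsOpen U) (f : ℍ[ℝ] → ℍ[ℝ])
    (f₀ f₁ g₀ g₁ : (Fin 4 → ℝ) → ℝ)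
    (hf₀ : ContDiff ℝ 1 f₀) (hf₁ : ContDiff ℝ 1 f₁)
    (hg₀ : ContDiff ℝ 1 g₀) (hg₁ : ContDiff ℝ 1 g₁)
    (hf : Represents f U f₀ f₁) (hg : Represents f U g₀ g₁)
    (c : ℍ[ℝ]) (hc : c ∈ U) (hreg : RegularEqs g₀ g₁ (toTuple c)) :
    RegularEqs f₀ f₁ (toTuple c) := by
  have hco : ∀ x ∈ U, f₁ (toTuple x) = g₁ (toTuple x) ∧
      x.imI * f₀ (toTuple x) = x.imI * g₀ (toTuple x) ∧
      x.imJ * f₀ (toTuple x) = x.imJ * g₀ (toTuple x) ∧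
      x.imK * f₀ (toTuple x) = x.imK * g₀ (toTuple x) := by
    intro x hx
    have h := (hf x hx).symm.trans (hg x hx)
    rw [aux_rep_mk, aux_rep_mk] at h; replace h := QuaternionAlgebra.mk.inj h
    tauto
  have h₀eq : ∀ x ∈ U, f₀ (toTuple x) = g₀ (toTuple x) := by
    intro x hx
    by_cases hxI : x.imI = 0
    · set ψ : ℝ → ℝ :=
        fun t => f₀ (toTuple (x + t • e 1)) - g₀ (toTuple (x + t • e 1)) with hψ
      have hcont : Continuous ψ := by
        have h1 : Continuous fun t : ℝ => toTuple (x + t • e 1) := by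
          rw [show toTuple = ⇑auxT from rfl]
          fun_prop
        exact (hf₀.continuous.comp h1).sub (hg₀.continuous.comp h1)
      have hev : ∀ᶠ t in nhdsWithin (0:ℝ) {t | t ≠ 0}, ψ t = 0 := by
        have hmem : {t : ℝ | x + t • e 1 ∈ U} ∈ nhds (0:ℝ) := by
          have hct : Continuous fun t : ℝ => x + t • e 1 := by fun_prop
          have h0 : x + (0:ℝ) • e 1 ∈ U := by simpa using hx
          exact hct.continuousAt.preimage_mem_nhds (hU.mem_nhds h0)
        filter_upwards [nhdsWithin_le_nhds hmem, self_mem_nhdsWithin] with t htU htne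
        have himI : (x + t • e 1).imI = t := by simp [eP1, hxI]
        have hmul := (hco _ htU).2.1
        rw [himI] at hmul
        have := mul_left_cancel₀ htne hmul
        simp [ψ, this]
      have h1 : Filter.Tendsto ψ (nhdsWithin (0:ℝ) {t | t ≠ 0}) (nhds (ψ 0)) :=
        hcont.continuousAt.tendsto.mono_left nhdsWithin_le_nhds
      have h2 : Filter.Tendsto ψ (nhdsWithin (0:ℝ) {t | t ≠ 0}) (nhds 0) :=
        Filter.Tendsto.congr' (Filter.EventuallyEq.symm hev) tendsto_const_nhds
      have hne : {t : ℝ | t ≠ 0} = ({0}ᶜ : Set ℝ) := by ext; simp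
      rw [hne] at h1 h2
      have h0 : ψ 0 = 0 := tendsto_nhds_unique h1 h2
      have hzz : toTuple (x + (0:ℝ) • e 1) = toTuple x := by norm_num
      rw [hψ] at h0
      simp only [hzz] at h0
      linarith
    · exact mul_left_cancel₀ hxI (hco x hx).2.1
  have h₁eq : ∀ x ∈ U, f₁ (toTuple x) = g₁ (toTuple x) := fun x hx => (hco x hx).1
  have hval : f₀ (toTuple c) = g₀ (toTuple c) := h₀eq c hc
  have hpd0 : ∀ k, pd f₀ k (toTuple c) = pd g₀ k (toTuple c) := by
    intro k
    rw [aux_pd_comp f₀ hf₀, aux_pd_comp g₀ hg₀]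
    congr 1
    apply Filter.EventuallyEq.fderiv_eq
    filter_upwards [hU.mem_nhds hc] with y hy using h₀eq y hy
  have hpd1 : ∀ k, pd f₁ k (toTuple c) = pd g₁ k (toTuple c) := by
    intro k
    rw [aux_pd_comp f₁ hf₁, aux_pd_comp g₁ hg₁]
    congr 1
    apply Filter.EventuallyEq.fderiv_eq
    filter_upwards [hU.mem_nhds hc] with y hy using h₁eq y hy
  obtain ⟨e1, e2, e3⟩ := hreg
  refine ⟨?_, ?_, ?_⟩
  · rw [hpd1, hval, hpd0, hpd0, hpd0]; exact e1
  · intro i hi; rw [hpd1, hpd0]; exact e2 i hi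
  · intro i j hi hj hij; rw [hpd0, hpd0]; exact e3 i j hi hj hij

/-- The derivative value `∂f/∂x₁(c)` as an explicit quaternion. -/
def Dval (f₀ f₁ : (Fin 4 → ℝ) → ℝ) (c : ℍ[ℝ]) : ℍ[ℝ] :=
  ⟨pd f₁ 0 (toTuple c), c.imI * pd f₀ 0 (toTuple c), c.imJ * pd f₀ 0 (toTuple c),
    c.imK * pd f₀ 0 (toTuple c)⟩

set_option maxHeartbeats 1000000 in
lemma aux_F_hasDeriv (f₀ f₁ : (Fin 4 → ℝ) → ℝ) (hf₀ : ContDiff ℝ 1 f₀) (hf₁ : ContDiff ℝ 1 f₁)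
    (c : ℍ[ℝ]) :
    ∃ L : ℍ[ℝ] →L[ℝ] ℍ[ℝ],
      HasFDerivAt (fun x : ℍ[ℝ] => f₁ (toTuple x) • e 0 + (x.imI * f₀ (toTuple x)) • e 1 +
        (x.imJ * f₀ (toTuple x)) • e 2 + (x.imK * f₀ (toTuple x)) • e 3) L c ∧
      L (e 0) = Dval f₀ f₁ c := by
  have hA : HasFDerivAt f₀ (fderiv ℝ f₀ (toTuple c)) (auxT c) :=
    (hf₀.differentiable one_ne_zero (toTuple c)).hasFDerivAt
  have hB : HasFDerivAt f₁ (fderiv ℝ f₁ (toTuple c)) (auxT c) :=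
    (hf₁.differentiable one_ne_zero (toTuple c)).hasFDerivAt
  have hf1T : HasFDerivAt (fun x : ℍ[ℝ] => f₁ (toTuple x))
      ((fderiv ℝ f₁ (toTuple c)).comp auxT) c :=
    hB.comp c auxT.hasFDerivAt
  have hf0T : HasFDerivAt (fun x : ℍ[ℝ] => f₀ (toTuple x))
      ((fderiv ℝ f₀ (toTuple c)).comp auxT) c :=
    hA.comp c auxT.hasFDerivAt
  have h1 : HasFDerivAt (fun x : ℍ[ℝ] => x.imI)
      ((ContinuousLinearMap.proj 1).comp auxT) c :=
    ((ContinuousLinearMap.proj (R := ℝ) (φ := fun _ : Fin 4 => ℝ) 1).comp auxT).hasFDerivAt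
  have h2 : HasFDerivAt (fun x : ℍ[ℝ] => x.imJ)
      ((ContinuousLinearMap.proj 2).comp auxT) c :=
    ((ContinuousLinearMap.proj (R := ℝ) (φ := fun _ : Fin 4 => ℝ) 2).comp auxT).hasFDerivAt
  have h3 : HasFDerivAt (fun x : ℍ[ℝ] => x.imK)
      ((ContinuousLinearMap.proj 3).comp auxT) c :=
    ((ContinuousLinearMap.proj (R := ℝ) (φ := fun _ : Fin 4 => ℝ) 3).comp auxT).hasFDerivAt
  have hbig := (((hf1T.smul_const (e 0)).add ((h1.mul hf0T).smul_const (e 1))).add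
      ((h2.mul hf0T).smul_const (e 2))).add ((h3.mul hf0T).smul_const (e 3))
  refine ⟨_, hbig, ?_⟩
  have he0 : auxT (e 0) = Pi.single 0 1 := auxTe 0
  simp only [ContinuousLinearMap.add_apply, ContinuousLinearMap.smulRight_apply,
    ContinuousLinearMap.comp_apply, ContinuousLinearMap.coe_smul', Pi.smul_apply,
    ContinuousLinearMap.proj_apply, he0, smul_eq_mul]
  rw [show (fderiv ℝ f₁ (toTuple c)) (Pi.single 0 1) = pd f₁ 0 (toTuple c) from rfl,
    show (fderiv ℝ f₀ (toTuple c)) (Pi.single 0 1) = pd f₀ 0 (toTuple c) from rfl]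
  simp only [Dval]
  ext <;> simp [Pi.single_apply, eP0, eP1, eP2, eP3]

set_option maxHeartbeats 2000000 in
lemma aux_num_hasDeriv (f₀ f₁ : (Fin 4 → ℝ) → ℝ) (hf₀ : ContDiff ℝ 1 f₀)
    (hf₁ : ContDiff ℝ 1 f₁) (c : ℍ[ℝ]) (hreg : RegularEqs f₀ f₁ (toTuple c))
    (Fc k2 k3 k4 : ℍ[ℝ]) :
    HasFDerivAt (fun Δq : ℍ[ℝ] =>
      (f₁ (toTuple c + auxT Δq) • e 0 + ((c.imI + auxT Δq 1) * f₀ (toTuple c + auxT Δq)) • e 1 +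
        ((c.imJ + auxT Δq 2) * f₀ (toTuple c + auxT Δq)) • e 2 +
        ((c.imK + auxT Δq 3) * f₀ (toTuple c + auxT Δq)) • e 3 - Fc)
      + ((c.imJ * f₀ (toTuple c + auxT Δq 1 • (Pi.single 2 1 : Fin 4 → ℝ)) +
            c.imK * f₀ (toTuple c + auxT Δq 1 • (Pi.single 3 1 : Fin 4 → ℝ))) • e 1 +
          ((-1:ℝ)^(3+4) * c.imJ * f₀ (toTuple c + auxT Δq 1 • (Pi.single 0 1 : Fin 4 → ℝ)) -
            c.imI * f₀ (toTuple c + auxT Δq 1 • (Pi.single 3 1 : Fin 4 → ℝ))) • e 3 -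
          ((-1:ℝ)^(3+4) * c.imK * f₀ (toTuple c + auxT Δq 1 • (Pi.single 0 1 : Fin 4 → ℝ)) +
            c.imI * f₀ (toTuple c + auxT Δq 1 • (Pi.single 2 1 : Fin 4 → ℝ))) • e 2 - k2)
      + ((c.imI * f₀ (toTuple c + auxT Δq 2 • (Pi.single 1 1 : Fin 4 → ℝ)) +
            c.imK * f₀ (toTuple c + auxT Δq 2 • (Pi.single 3 1 : Fin 4 → ℝ))) • e 2 +
          ((-1:ℝ)^(2+4) * c.imI * f₀ (toTuple c + auxT Δq 2 • (Pi.single 0 1 : Fin 4 → ℝ)) -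
            c.imJ * f₀ (toTuple c + auxT Δq 2 • (Pi.single 3 1 : Fin 4 → ℝ))) • e 3 -
          ((-1:ℝ)^(2+4) * c.imK * f₀ (toTuple c + auxT Δq 2 • (Pi.single 0 1 : Fin 4 → ℝ)) +
            c.imJ * f₀ (toTuple c + auxT Δq 2 • (Pi.single 1 1 : Fin 4 → ℝ))) • e 1 - k3)
      + ((c.imI * f₀ (toTuple c + auxT Δq 3 • (Pi.single 1 1 : Fin 4 → ℝ)) +
            c.imJ * f₀ (toTuple c + auxT Δq 3 • (Pi.single 2 1 : Fin 4 → ℝ))) • e 3 +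
          ((-1:ℝ)^(2+3) * c.imI * f₀ (toTuple c + auxT Δq 3 • (Pi.single 0 1 : Fin 4 → ℝ)) -
            c.imK * f₀ (toTuple c + auxT Δq 3 • (Pi.single 2 1 : Fin 4 → ℝ))) • e 2 -
          ((-1:ℝ)^(2+3) * c.imJ * f₀ (toTuple c + auxT Δq 3 • (Pi.single 0 1 : Fin 4 → ℝ)) +
            c.imK * f₀ (toTuple c + auxT Δq 3 • (Pi.single 1 1 : Fin 4 → ℝ))) • e 1 - k4))
      (ContinuousLinearMap.mul ℝ ℍ[ℝ] (Dval f₀ f₁ c)) 0 := by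
  have hA : HasFDerivAt f₀ (fderiv ℝ f₀ (toTuple c)) (toTuple c) :=
    (hf₀.differentiable one_ne_zero (toTuple c)).hasFDerivAt
  have hB : HasFDerivAt f₁ (fderiv ℝ f₁ (toTuple c)) (toTuple c) :=
    (hf₁.differentiable one_ne_zero (toTuple c)).hasFDerivAt
  have hinner : HasFDerivAt (fun Δq : ℍ[ℝ] => toTuple c + auxT Δq) auxT 0 :=
    auxT.hasFDerivAt.const_add _
  have hf1T : HasFDerivAt (fun Δq : ℍ[ℝ] => f₁ (toTuple c + auxT Δq))
      ((fderiv ℝ f₁ (toTuple c)).comp auxT) 0 := by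
    have hb : HasFDerivAt f₁ (fderiv ℝ f₁ (toTuple c)) (toTuple c + auxT 0) := by simpa using hB
    exact hb.comp 0 hinner
  have hf0T : HasFDerivAt (fun Δq : ℍ[ℝ] => f₀ (toTuple c + auxT Δq))
      ((fderiv ℝ f₀ (toTuple c)).comp auxT) 0 := by
    have ha : HasFDerivAt f₀ (fderiv ℝ f₀ (toTuple c)) (toTuple c + auxT 0) := by simpa using hA
    exact ha.comp 0 hinner
  have hcoord : ∀ k : Fin 4, HasFDerivAt (fun Δq : ℍ[ℝ] => auxT Δq k)
      ((ContinuousLinearMap.proj k).comp auxT) 0 := fun k =>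
    ((ContinuousLinearMap.proj (R := ℝ) (φ := fun _ : Fin 4 => ℝ) k).comp auxT).hasFDerivAt
  have hatom : ∀ k m : Fin 4, HasFDerivAt
      (fun Δq : ℍ[ℝ] => f₀ (toTuple c + auxT Δq k • (Pi.single m 1 : Fin 4 → ℝ)))
      ((fderiv ℝ f₀ (toTuple c)).comp
        (((ContinuousLinearMap.proj k).comp auxT).smulRight (Pi.single m 1))) 0 := by
    intro k m
    have hi : HasFDerivAt (fun Δq : ℍ[ℝ] => toTuple c +
        ((((ContinuousLinearMap.proj (R := ℝ) (φ := fun _ : Fin 4 => ℝ) k).comp auxT).smulRight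
          (Pi.single m 1)) Δq))
        (((ContinuousLinearMap.proj k).comp auxT).smulRight (Pi.single m 1)) 0 :=
      (ContinuousLinearMap.hasFDerivAt _).const_add _
    have ha : HasFDerivAt f₀ (fderiv ℝ f₀ (toTuple c)) (toTuple c +
        ((((ContinuousLinearMap.proj (R := ℝ) (φ := fun _ : Fin 4 => ℝ) k).comp auxT).smulRight
          (Pi.single m 1)) 0)) := by simpa using hA
    exact ha.comp 0 hi
  have hFpart := ((((hf1T.smul_const (e 0)).add
      ((((hcoord 1).const_add c.imI).mul hf0T).smul_const (e 1))).add
      ((((hcoord 2).const_add c.imJ).mul hf0T).smul_const (e 2))).add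
      ((((hcoord 3).const_add c.imK).mul hf0T).smul_const (e 3))).sub_const Fc
  have hG2 := ((((((hatom 1 2).const_mul c.imJ).add ((hatom 1 3).const_mul c.imK)).smul_const (e 1)).add
      ((((hatom 1 0).const_mul ((-1:ℝ)^(3+4) * c.imJ)).sub ((hatom 1 3).const_mul c.imI)).smul_const (e 3))).sub
      ((((hatom 1 0).const_mul ((-1:ℝ)^(3+4) * c.imK)).add ((hatom 1 2).const_mul c.imI)).smul_const (e 2))).sub_const k2
  have hG3 := ((((((hatom 2 1).const_mul c.imI).add ((hatom 2 3).const_mul c.imK)).smul_const (e 2)).add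
      ((((hatom 2 0).const_mul ((-1:ℝ)^(2+4) * c.imI)).sub ((hatom 2 3).const_mul c.imJ)).smul_const (e 3))).sub
      ((((hatom 2 0).const_mul ((-1:ℝ)^(2+4) * c.imK)).add ((hatom 2 1).const_mul c.imJ)).smul_const (e 1))).sub_const k3
  have hG4 := ((((((hatom 3 1).const_mul c.imI).add ((hatom 3 2).const_mul c.imJ)).smul_const (e 3)).add
      ((((hatom 3 0).const_mul ((-1:ℝ)^(2+3) * c.imI)).sub ((hatom 3 2).const_mul c.imK)).smul_const (e 2))).sub
      ((((hatom 3 0).const_mul ((-1:ℝ)^(2+3) * c.imJ)).add ((hatom 3 1).const_mul c.imK)).smul_const (e 1))).sub_const k4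
  have hbig := ((hFpart.add hG2).add hG3).add hG4
  refine hbig.congr_fderiv ?_
  have Apd : ∀ m : Fin 4, fderiv ℝ f₀ (toTuple c) (Pi.single m 1) = pd f₀ m (toTuple c) :=
    fun _ => rfl
  have hAv : ∀ v : ℍ[ℝ], fderiv ℝ f₀ (toTuple c) (auxT v) =
      v.re * pd f₀ 0 (toTuple c) + v.imI * pd f₀ 1 (toTuple c) +
      v.imJ * pd f₀ 2 (toTuple c) + v.imK * pd f₀ 3 (toTuple c) := by
    intro v; rw [auxTv v]; simp [Apd]
  have hBv : ∀ v : ℍ[ℝ], fderiv ℝ f₁ (toTuple c) (auxT v) =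
      v.re * pd f₁ 0 (toTuple c) + v.imI * pd f₁ 1 (toTuple c) +
      v.imJ * pd f₁ 2 (toTuple c) + v.imK * pd f₁ 3 (toTuple c) := by
    intro v; rw [auxTv v]
    simp [show ∀ m : Fin 4, fderiv ℝ f₁ (toTuple c) (Pi.single m 1) = pd f₁ m (toTuple c) from
      fun _ => rfl]
  obtain ⟨h1, h2, h3⟩ := hreg
  have hb1 := h2 1 (by decide); have hb2 := h2 2 (by decide); have hb3 := h2 3 (by decide)
  have r12 := h3 1 2 (by decide) (by decide) (by decide)
  have r13 := h3 1 3 (by decide) (by decide) (by decide)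
  have r23 := h3 2 3 (by decide) (by decide) (by decide)
  simp only [aux_tt0, aux_tt1, aux_tt2, aux_tt3] at h1 hb1 hb2 hb3 r12 r13 r23
  refine ContinuousLinearMap.ext fun v => ?_
  simp only [ContinuousLinearMap.add_apply, ContinuousLinearMap.coe_sub',
    ContinuousLinearMap.coe_add', Pi.sub_apply, Pi.add_apply,
    ContinuousLinearMap.smulRight_apply, ContinuousLinearMap.comp_apply,
    ContinuousLinearMap.coe_smul', Pi.smul_apply, ContinuousLinearMap.proj_apply,
    map_zero, Pi.zero_apply, add_zero, mul_zero, zero_mul, smul_eq_mul,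
    ContinuousLinearMap.map_smul, ContinuousLinearMap.mul_apply, hAv, hBv, Apd,
    auxT1, auxT2, auxT3]
  rw [show ((ContinuousLinearMap.mul ℝ ℍ[ℝ]) (Dval f₀ f₁ c)) v = Dval f₀ f₁ c * v from rfl]
  apply Quaternion.ext
  · rw [Quaternion.re_mul]; simp only [Dval]
    simp [Quaternion.re_mul, eP0, eP1, eP2, eP3]
    linear_combination v.imI * hb1 + v.imJ * hb2 + v.imK * hb3
  · rw [Quaternion.imI_mul]; simp only [Dval]
    simp [Quaternion.imI_mul, eP0, eP1, eP2, eP3]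
    linear_combination (-v.imI) * h1 + v.imJ * r12 + v.imK * r13
  · rw [Quaternion.imJ_mul]; simp only [Dval]
    simp [Quaternion.imJ_mul, eP0, eP1, eP2, eP3]
    linear_combination (-v.imJ) * h1 + (-v.imI) * r12 + v.imK * r23
  · rw [Quaternion.imK_mul]; simp only [Dval]
    simp [Quaternion.imK_mul, eP0, eP1, eP2, eP3]
    linear_combination (-v.imK) * h1 + (-v.imI) * r13 + (-v.imJ) * r23

lemma aux_quot_tendsto {N : ℍ[ℝ] → ℍ[ℝ]} {D : ℍ[ℝ]}
    (hN : HasFDerivAt N (ContinuousLinearMap.mul ℝ ℍ[ℝ] D) 0) (hN0 : N 0 = 0) :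
    Filter.Tendsto (fun Δq : ℍ[ℝ] => N Δq * Δq⁻¹)
      (nhdsWithin 0 {q : ℍ[ℝ] | q ≠ 0}) (nhds D) := by
  have hlo : (fun h : ℍ[ℝ] => N h - D * h) =o[nhds 0] fun h : ℍ[ℝ] => h := by
    have := hasFDerivAt_iff_isLittleO_nhds_zero.mp hN
    simpa [hN0, ContinuousLinearMap.mul_apply] using this
  have hdiv : Filter.Tendsto (fun h : ℍ[ℝ] => ‖N h - D * h‖ / ‖h‖) (nhds 0) (nhds 0) :=
    hlo.norm_norm.tendsto_div_nhds_zero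
  rw [tendsto_iff_norm_sub_tendsto_zero]
  apply Filter.Tendsto.congr' ?_ (hdiv.mono_left nhdsWithin_le_nhds)
  filter_upwards [self_mem_nhdsWithin] with q (hq : q ≠ 0)
  have hrw : N q * q⁻¹ - D = (N q - D * q) * q⁻¹ := by
    rw [sub_mul, mul_assoc, mul_inv_cancel₀ hq, mul_one]
  rw [hrw, norm_mul, norm_inv, div_eq_mul_inv]

/-- if `f` is algebraic regular at `c`, the right difference quotient
tends to `∂f/∂x₁(c)` as `Δq → 0`. -/
theorem tendsto_rightQuot_of_algebraicRegularAt (U : Set ℍ[ℝ]) (hU : IsOpen U)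
    (f : ℍ[ℝ] → ℍ[ℝ]) (f₀ f₁ : (Fin 4 → ℝ) → ℝ)
    (hf₀ : ContDiff ℝ 1 f₀) (hf₁ : ContDiff ℝ 1 f₁)
    (hf : Represents f U f₀ f₁) (c : ℍ[ℝ]) (hc : c ∈ U)
    (hreg : AlgebraicRegularAt f U c) :
    Filter.Tendsto (rightQuot f f₀ c) (nhdsWithin 0 {q : ℍ[ℝ] | q ≠ 0})
      (nhds (fderiv ℝ f c (e 0)))  := by
  obtain ⟨g₀, g₁, hg₀, hg₁, hgrep, hgreg⟩ := hreg
  have hregf : RegularEqs f₀ f₁ (toTuple c) :=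
    aux_transfer U hU f f₀ f₁ g₀ g₁ hf₀ hf₁ hg₀ hg₁ hf hgrep c hc hgreg
  obtain ⟨LF, hLF, hLFe0⟩ := aux_F_hasDeriv f₀ f₁ hf₀ hf₁ c
  have hff : f =ᶠ[nhds c] (fun x : ℍ[ℝ] => f₁ (toTuple x) • e 0 + (x.imI * f₀ (toTuple x)) • e 1 +
      (x.imJ * f₀ (toTuple x)) • e 2 + (x.imK * f₀ (toTuple x)) • e 3) := by
    filter_upwards [hU.mem_nhds hc] with x hx using hf x hx
  have hfd : HasFDerivAt f LF c := hLF.congr_of_eventuallyEq hff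
  have hD : fderiv ℝ f c (e 0) = Dval f₀ f₁ c := by rw [hfd.fderiv]; exact hLFe0
  rw [hD]
  have hnum := aux_num_hasDeriv f₀ f₁ hf₀ hf₁ c hregf (f c)
    (frTwo f₀ c c) (frThree f₀ c c) (frFour f₀ c c)
  refine Filter.Tendsto.congr' ?_ (aux_quot_tendsto hnum ?_)
  · have hmem : {Δq : ℍ[ℝ] | c + Δq ∈ U} ∈ nhds (0:ℍ[ℝ]) := by
      have hcont : Continuous (fun Δq : ℍ[ℝ] => c + Δq) := by fun_prop
      have h0 : c + (0:ℍ[ℝ]) ∈ U := by simpa using hc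
      exact hcont.continuousAt.preimage_mem_nhds (hU.mem_nhds h0)
    filter_upwards [nhdsWithin_le_nhds hmem] with Δq hΔq
    show _ = rightQuot f f₀ c Δq
    rw [rightQuot, hf _ hΔq, frTwo_line, frThree_line, frFour_line, aux_toTuple_add]
    rfl
  · show _ = (0:ℍ[ℝ])
    have hfc := hf c hc
    simp only [map_zero, Pi.zero_apply, add_zero, zero_smul]
    rw [hfc]
    simp [frTwo, frThree, frFour, toTuple]
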